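/- A rectangle with sides a + b√2 and c + d√2 (both positive, a, b, c, d ∈ ℚ) has nonnegative x-area (a + bx)(c + dx) for every real x if and only if the ratio of its sides (c + d√2)/(a + b√2) is rational. -/

import Mathlib

lemma sqrt2_coeffs_eq (p q r s : ℚ)
    (h : (p : ℝ) + (q : ℝ) * Real.sqrt 2 = (r : ℝ) + (s : ℝ) * Real.sqrt 2) :
    p = r ∧ q = s := by
  by_cases hqs : q = s
  · subst hqs
    constructor
    · have : (p : ℝ) = r := by linarith
      exact_mod_cast this
    · rfl
  · exfalso
    have hqs' : (q : ℝ) - s ≠ 0 := by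
      intro h0
      apply hqs
      have : (q : ℝ) = s := by linarith
      exact_mod_cast this
    have hqs2 : (s : ℝ) - q ≠ 0 := by intro h0; apply hqs'; linarith
    have : Real.sqrt 2 = ((p - r) / (s - q) : ℚ) := by
      push_cast
      rw [eq_div_iff hqs2]
      linear_combination -h
    exact irrational_sqrt_two ⟨_, this.symm⟩

/-- A rectangle with positive sides a + b√2 and c + d√2 (a, b, c, d ∈ ℚ) has
nonnegative x-area (a + bx)(c + dx) for every real x if and only if the ratio of
its sides is rational. -/
theorem xArea_nonneg_iff_ratio_rational
    (a b c d : ℚ)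
    (ha : 0 < (a : ℝ) + (b : ℝ) * Real.sqrt 2)
    (hc : 0 < (c : ℝ) + (d : ℝ) * Real.sqrt 2) :
    (∀ x : ℝ, 0 ≤ ((a : ℝ) + (b : ℝ) * x) * ((c : ℝ) + (d : ℝ) * x)) ↔
      ∃ q : ℚ, ((c : ℝ) + (d : ℝ) * Real.sqrt 2) / ((a : ℝ) + (b : ℝ) * Real.sqrt 2) = q := by
  have ha' := ne_of_gt ha
  constructor
  · intro H
    by_cases hb : (b : ℝ) = 0
    · -- then a > 0
      have hb0 : b = 0 := by exact_mod_cast hb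
      have hapos : (0 : ℝ) < a := by rw [hb] at ha; simpa using ha
      have hd : (d : ℝ) = 0 := by
        by_contra hd
        have hx := H ((-(c : ℝ) - 1) / d)
        rw [hb] at hx
        have h1 : (c : ℝ) + d * ((-(c : ℝ) - 1) / d) = -1 := by field_simp; ring
        rw [h1] at hx
        nlinarith
      refine ⟨c / a, ?_⟩
      have ha0 : a ≠ 0 := by exact_mod_cast ne_of_gt hapos
      rw [hb, hd]
      push_cast
      field_simp
      ring
    · -- key: b*c = a*d
      set e : ℝ := (b : ℝ) * c - a * d with he
      set m : ℝ := (b : ℝ) * d with hm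
      have he0 : e = 0 := by
        by_contra he0
        have hε : (0 : ℝ) < |m| + 1 := by positivity
        set ε : ℝ := e / (|m| + 1) with hεdef
        have hx := H (-(a : ℝ) / b - ε)
        have h1 : (a : ℝ) + b * (-(a : ℝ) / b - ε) = -(b * ε) := by field_simp; ring
        have h2 : (c : ℝ) + d * (-(a : ℝ) / b - ε) = e / b - d * ε := by
          rw [he]; field_simp; ring
        rw [h1, h2] at hx
        have hx' : 0 ≤ m * ε ^ 2 - e * ε := by
          have : -(b * ε) * (e / b - d * ε) = m * ε ^ 2 - e * ε := by
            rw [hm]; field_simp; ring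
          linarith [this ▸ hx]
        have hεval : ε * (|m| + 1) = e := by rw [hεdef]; field_simp
        have habs : m ≤ |m| := le_abs_self m
        have key : 0 ≤ (m * ε ^ 2 - e * ε) * (|m| + 1) ^ 2 := mul_nonneg hx' (by positivity)
        have h3 : (m * ε ^ 2 - e * ε) * (|m| + 1) ^ 2 = e ^ 2 * (m - |m| - 1) := by
          rw [hεdef]; field_simp; ring
        rw [h3] at key
        have hsq : e ^ 2 ≤ 0 := by nlinarith [sq_nonneg e, habs, key]
        have hsq2 : e ^ 2 = 0 := le_antisymm hsq (sq_nonneg e)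
        exact he0 (pow_eq_zero_iff two_ne_zero |>.mp hsq2)
      have hbc : (b : ℝ) * c = a * d := by rw [he] at he0; linarith
      have hd : (d : ℝ) ≠ 0 := by
        intro hd0
        have hc0 : (c : ℝ) = 0 := by
          have := hbc
          rw [hd0] at this
          simp at this
          rcases this with h | h
          · exact absurd (by exact_mod_cast h) hb
          · exact_mod_cast h
        rw [hc0, hd0] at hc
        simp at hc
      refine ⟨d / b, ?_⟩
      push_cast
      rw [div_eq_iff ha', div_mul_eq_mul_div, eq_div_iff hb]
      nlinarith [hbc]
  · rintro ⟨q, hq⟩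
    rw [div_eq_iff ha'] at hq
    have hq' : (c : ℝ) + d * Real.sqrt 2 = (q * a : ℚ) + (q * b : ℚ) * Real.sqrt 2 := by
      push_cast; rw [hq]; ring
    obtain ⟨hca, hdb⟩ := sqrt2_coeffs_eq c d (q * a) (q * b) hq'
    have hqpos : (0 : ℝ) < q := by
      rcases lt_trichotomy ((q : ℝ)) 0 with h | h | h
      · nlinarith [hq, ha, hc]
      · rw [hq, h] at hc; simp at hc
      · exact h
    intro x
    have hca' : (c : ℝ) = q * a := by exact_mod_cast hca
    have hdb' : (d : ℝ) = q * b := by exact_mod_cast hdb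
    rw [hca', hdb']
    have : ((a : ℝ) + b * x) * (q * a + q * b * x) = q * ((a : ℝ) + b * x) ^ 2 := by ring
    rw [this]
    positivity
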